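/- Let f : ℝ^m × ℝ^d → ℝ be continuously differentiable and g : ℝ^m × ℝ^d → ℝ be twice continuously differentiable. Let θ̂ : ℝ^m → ℝ^d be differentiable with ∇_θ g(η, θ̂(η)) = 0 for all η, and suppose H(η) := ∇²_{θθ} g(η, θ̂(η)) is invertible for all η. Define V(η) := f(η, θ̂(η)) and suppose V satisfies the first-order γ-strong concavity inequality V(y) ≤ V(x) + ⟨∇V(x), y − x⟩ − (γ/2)‖y − x‖² for all x, y, for some γ > 0. Let η* satisfy ∇_η f(η*, θ̂(η*)) = 0 and set θ* := θ̂(η*). Then for every η ∈ ℝ^m (in particular for any maximizer η♯ of V), 0 ≤ V(η♯) − V(η*) and V(η) − V(η*) ≤ (1/(2γ)) ‖∇²_{ηθ} g(η*, θ*) · H(η*)^{-1} · ∇_θ f(η*, θ*)‖², where ∇²_{ηθ} g is the m × d matrix of mixed second partial derivatives. -/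

import Mathlib

open scoped RealInnerProductSpace

section AuxBOC
open ContinuousLinearMap InnerProductSpace


private theorem aux_sq_bound {c t γ : ℝ} (hγ : 0 < γ) :
    c * t - γ / 2 * t ^ 2 ≤ 1 / (2 * γ) * c ^ 2 := by
  rw [mul_comm (1 / (2 * γ)), mul_one_div, le_div_iff₀ (by positivity)]
  nlinarith [sq_nonneg (c - γ * t)]

theorem aux_benefit
    {E F : Type*} [NormedAddCommGroup E] [InnerProductSpace ℝ E] [CompleteSpace E]
    [NormedAddCommGroup F] [InnerProductSpace ℝ F] [CompleteSpace F]
    (f g : E → F → ℝ)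
    (hf : ContDiff ℝ 1 fun p : E × F => f p.1 p.2)
    (hg : ContDiff ℝ 2 fun p : E × F => g p.1 p.2)
    (θhat : E → F) (hθhat : Differentiable ℝ θhat)
    (hcrit : ∀ η, gradient (g η) (θhat η) = 0)
    (ηstar : E) (hηstar : gradient (fun η => f η (θhat ηstar)) ηstar = 0)
    (H : F →L[ℝ] F) (hH : H = fderiv ℝ (gradient (g ηstar)) (θhat ηstar))
    (Hinv : F →L[ℝ] F)
    (hHinv : Hinv.comp H = ContinuousLinearMap.id ℝ F ∧
      H.comp Hinv = ContinuousLinearMap.id ℝ F)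
    (M : E →L[ℝ] F) (hM : M = fderiv ℝ (fun η' => gradient (g η') (θhat ηstar)) ηstar)
    (V : E → ℝ) (hV : ∀ η, V η = f η (θhat η))
    (γ : ℝ) (hγ : 0 < γ)
    (hconc : ∀ x y, V y ≤ V x + ⟪gradient V x, y - x⟫ - γ / 2 * ‖y - x‖ ^ 2) :
    (∀ ηsharp : E, (∀ η, V η ≤ V ηsharp) → 0 ≤ V ηsharp - V ηstar) ∧
    ∀ η, V η - V ηstar ≤
      1 / (2 * γ) *
        ‖ContinuousLinearMap.adjoint M (Hinv (gradient (f ηstar) (θhat ηstar)))‖ ^ 2 := by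
  obtain ⟨hinvl, hinvr⟩ := hHinv
  set θstar := θhat ηstar with hθstar
  set gF : E × F → ℝ := fun p => g p.1 p.2 with hgFdef
  set fF : E × F → ℝ := fun p => f p.1 p.2 with hfFdef
  have hgFd : Differentiable ℝ gF := hg.differentiable (by simp)
  have hfFd : Differentiable ℝ fF := hf.differentiable (by simp)
  have h21 : ((2 : WithTop ℕ∞)) = 1 + 1 := by norm_num
  have hg' : Differentiable ℝ (fderiv ℝ gF) := by
    rw [h21] at hg
    exact (contDiff_succ_iff_fderiv.mp hg).2.2.differentiable (by simp)
  -- dual equivalences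
  let eF : StrongDual ℝ F ≃L[ℝ] F := (toDual ℝ F).symm.toContinuousLinearEquiv
  let eE : StrongDual ℝ E ≃L[ℝ] E := (toDual ℝ E).symm.toContinuousLinearEquiv
  have heF : ∀ (A : StrongDual ℝ F) (v : F), ⟪eF A, v⟫ = A v := fun A v =>
    toDual_symm_apply
  have heE : ∀ (A : StrongDual ℝ E) (v : E), ⟪eE A, v⟫ = A v := fun A v =>
    toDual_symm_apply
  have hgradF : ∀ (φ : F → ℝ) (x : F), gradient φ x = eF (fderiv ℝ φ x) := fun _ _ => rfl
  have hgradE : ∀ (φ : E → ℝ) (x : E), gradient φ x = eE (fderiv ℝ φ x) := fun _ _ => rfl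
  -- partial derivative of g in θ
  have hpart : ∀ (η : E) (θ : F),
      HasFDerivAt (g η) ((fderiv ℝ gF (η, θ)).comp (inr ℝ E F)) θ := fun η θ =>
    ((hgFd (η, θ)).hasFDerivAt).comp θ (hasFDerivAt_prodMk_right η θ)
  -- the map Φ (η, θ) = gradient (g η) θ
  set Ψ : E × F → StrongDual ℝ F := fun p => (fderiv ℝ gF p).comp (inr ℝ E F) with hΨdef
  have hΨd : Differentiable ℝ Ψ :=
    (((compL ℝ F (E × F) ℝ).flip (inr ℝ E F)).differentiable).comp hg'
  set Φ : E × F → F := fun p => eF (Ψ p) with hΦdef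
  have hΦd : Differentiable ℝ Φ :=
    ((eF : StrongDual ℝ F →L[ℝ] F).differentiable).comp hΨd
  have hΦeq : ∀ (η : E) (θ : F), gradient (g η) θ = Φ (η, θ) := by
    intro η θ
    rw [hgradF]
    exact congrArg eF (hpart η θ).fderiv
  set p0 : E × F := (ηstar, θstar) with hp0
  set D := fderiv ℝ Φ p0 with hD
  set Dθ := fderiv ℝ θhat ηstar with hDθdef
  have hHeq : H = D.comp (inr ℝ E F) := by
    rw [hH]
    have h1 : gradient (g ηstar) = fun θ => Φ (ηstar, θ) := funext fun θ => hΦeq ηstar θ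
    rw [h1]
    exact (((hΦd p0).hasFDerivAt).comp θstar (hasFDerivAt_prodMk_right ηstar θstar)).fderiv
  have hMeq : M = D.comp (inl ℝ E F) := by
    rw [hM]
    have h1 : (fun η' => gradient (g η') θstar) = fun η' => Φ (η', θstar) :=
      funext fun η' => hΦeq η' θstar
    rw [h1]
    exact (((hΦd p0).hasFDerivAt).comp ηstar (hasFDerivAt_prodMk_left (𝕜 := ℝ) ηstar θstar)).fderiv
  -- differentiate the constraint
  have hzero : (fun η => Φ (η, θhat η)) = fun _ => (0 : F) := by
    funext η; rw [← hΦeq]; exact hcrit η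
  have hchain : HasFDerivAt (fun η => Φ (η, θhat η))
      (D.comp ((ContinuousLinearMap.id ℝ E).prod Dθ)) ηstar :=
    ((hΦd p0).hasFDerivAt).comp (f := fun x => (id x, θhat x)) ηstar ((hasFDerivAt_id ηstar).prodMk (hθhat ηstar).hasFDerivAt)
  have hderiv0 : D.comp ((ContinuousLinearMap.id ℝ E).prod Dθ) = 0 := by
    rw [← hchain.fderiv, hzero]
    exact fderiv_const_apply 0
  have hMHv : ∀ v : E, M v + H (Dθ v) = 0 := by
    intro v
    have h1 : D (v, Dθ v) = 0 := by
      have h2 := congrArg (fun (L : E →L[ℝ] F) => L v) hderiv0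
      simpa using h2
    calc M v + H (Dθ v) = D (v, 0) + D (0, Dθ v) := by rw [hHeq, hMeq]; rfl
      _ = D ((v, 0) + (0, Dθ v)) := (map_add D _ _).symm
      _ = D (v, Dθ v) := by rw [Prod.mk_add_mk, add_zero, zero_add]
      _ = 0 := h1
  have hDθv : ∀ v, Dθ v = -(Hinv (M v)) := by
    intro v
    have h1 : H (Dθ v) = -(M v) := by
      have := hMHv v
      have h2 : M v + H (Dθ v) - M v = 0 - M v := by rw [this]
      simpa using h2
    have h2 : Hinv (H (Dθ v)) = Dθ v := by
      have h3 := congrArg (fun L : F →L[ℝ] F => L (Dθ v)) hinvl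
      simpa using h3
    rw [← h2, h1, map_neg]
  -- symmetry of H
  have hgη : ContDiff ℝ 2 (g ηstar) := hg.comp (contDiff_const.prodMk contDiff_id)
  have hgηd1 : Differentiable ℝ (fderiv ℝ (g ηstar)) := by
    rw [h21] at hgη
    exact (contDiff_succ_iff_fderiv.mp hgη).2.2.differentiable (by simp)
  set B := fderiv ℝ (fderiv ℝ (g ηstar)) θstar with hB
  have hHB : ∀ u, H u = eF (B u) := by
    intro u
    have h1 : gradient (g ηstar) =
        fun θ => (eF : StrongDual ℝ F →L[ℝ] F) (fderiv ℝ (g ηstar) θ) := rfl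
    have h2 : HasFDerivAt (fun θ => (eF : StrongDual ℝ F →L[ℝ] F) (fderiv ℝ (g ηstar) θ))
        ((eF : StrongDual ℝ F →L[ℝ] F).comp B) θstar :=
      ((eF : StrongDual ℝ F →L[ℝ] F).hasFDerivAt).comp θstar (hgηd1 θstar).hasFDerivAt
    rw [hH, h1, h2.fderiv]
    rfl
  have hsymm : ∀ u v, ⟪H u, v⟫ = ⟪H v, u⟫ := by
    intro u v
    have hs : IsSymmSndFDerivAt ℝ (g ηstar) θstar :=
      hgη.contDiffAt.isSymmSndFDerivAt (by norm_num)
    rw [hHB u, hHB v, heF, heF]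
    exact hs u v
  have hinvsymm : ∀ x y : F, ⟪Hinv x, y⟫ = ⟪x, Hinv y⟫ := by
    intro x y
    have hHy : H (Hinv y) = y := by
      have := congrArg (fun L : F →L[ℝ] F => L y) hinvr; simpa using this
    have hHx : H (Hinv x) = x := by
      have := congrArg (fun L : F →L[ℝ] F => L x) hinvr; simpa using this
    calc ⟪Hinv x, y⟫ = ⟪Hinv x, H (Hinv y)⟫ := by rw [hHy]
      _ = ⟪H (Hinv y), Hinv x⟫ := real_inner_comm _ _
      _ = ⟪H (Hinv x), Hinv y⟫ := hsymm _ _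
      _ = ⟪x, Hinv y⟫ := by rw [hHx]
  -- gradient of V at ηstar
  set q := gradient (f ηstar) θstar with hq
  have hVfun : V = fun η => fF (η, θhat η) := funext fun η => hV η
  have hVder : HasFDerivAt V
      ((fderiv ℝ fF p0).comp ((ContinuousLinearMap.id ℝ E).prod Dθ)) ηstar := by
    rw [hVfun]
    exact ((hfFd p0).hasFDerivAt).comp ηstar ((hasFDerivAt_id ηstar).prodMk (hθhat ηstar).hasFDerivAt)
  have hgradV : ∀ v, ⟪gradient V ηstar, v⟫ = fderiv ℝ fF p0 (v, Dθ v) := by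
    intro v
    rw [hgradE V ηstar, heE, hVder.fderiv]
    rfl
  have hfpartθ : fderiv ℝ (f ηstar) θstar = (fderiv ℝ fF p0).comp (inr ℝ E F) :=
    (((hfFd p0).hasFDerivAt).comp θstar (hasFDerivAt_prodMk_right ηstar θstar)).fderiv
  have hqv : ∀ w, ⟪q, w⟫ = fderiv ℝ fF p0 (0, w) := by
    intro w
    rw [hq, hgradF, heF, hfpartθ]
    rfl
  have hfpartη : fderiv ℝ (fun η => f η θstar) ηstar = (fderiv ℝ fF p0).comp (inl ℝ E F) :=
    (((hfFd p0).hasFDerivAt).comp (f := fun e => (e, θstar)) ηstar (hasFDerivAt_prodMk_left (𝕜 := ℝ) ηstar θstar)).fderiv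
  have hηzero : ∀ v : E, fderiv ℝ fF p0 (v, 0) = 0 := by
    intro v
    have h0 : ⟪gradient (fun η => f η θstar) ηstar, v⟫ = (0 : ℝ) := by
      rw [hηstar]; simp
    rw [hgradE, heE, hfpartη] at h0
    simpa using h0
  have hgradVeq : gradient V ηstar = -(ContinuousLinearMap.adjoint M (Hinv q)) := by
    apply ext_inner_right ℝ
    intro v
    rw [hgradV v]
    have hsplit : ((v, Dθ v) : E × F) = (v, 0) + (0, Dθ v) := by
      rw [Prod.mk_add_mk, add_zero, zero_add]
    rw [hsplit, map_add, hηzero v, zero_add, ← hqv (Dθ v), hDθv v]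
    rw [inner_neg_left, inner_neg_right]
    congr 1
    calc ⟪q, Hinv (M v)⟫ = ⟪Hinv q, M v⟫ := (hinvsymm q (M v)).symm
      _ = ⟪ContinuousLinearMap.adjoint M (Hinv q), v⟫ :=
        (ContinuousLinearMap.adjoint_inner_left M v (Hinv q)).symm
  -- conclusion
  refine ⟨fun ηs hηs => by linarith [hηs ηstar], fun η => ?_⟩
  have h1 := hconc ηstar η
  set G := gradient V ηstar with hG
  have h2 : ⟪G, η - ηstar⟫ ≤ ‖G‖ * ‖η - ηstar‖ := real_inner_le_norm _ _
  have h3 : ‖G‖ * ‖η - ηstar‖ - γ / 2 * ‖η - ηstar‖ ^ 2 ≤ 1 / (2 * γ) * ‖G‖ ^ 2 :=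
    aux_sq_bound hγ
  have h4 : ‖G‖ = ‖ContinuousLinearMap.adjoint M (Hinv q)‖ := by
    rw [hgradVeq]; exact norm_neg _
  have h5 : 1 / (2 * γ) * ‖G‖ ^ 2 =
      1 / (2 * γ) * ‖ContinuousLinearMap.adjoint M (Hinv q)‖ ^ 2 := by rw [h4]
  linarith [h1, h2, h3, h5]

end AuxBOC

/-- **Theorem B (generalized bound on the benefit of coordination), parametrized form.**
With the learner best-responding via `θ̂` with invertible Hessian
`H = ∇²_{θθ} g(η*, θ*)` at the selfish stable strategy `η*` (where
`∇_η f(η*, θ̂(η*)) = 0` and `θ* = θ̂(η*)`), and the equilibrium utility `V(η) = f(η, θ̂(η))`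
`γ`-strongly concave, the benefit of coordination satisfies
`0 ≤ V(η♯) − V(η*) ≤ (1/(2γ)) ‖∇²_{ηθ} g(η*, θ*) H⁻¹ ∇_θ f(η*, θ*)‖²`,
where `M = ∇²_{θη} g(η*, θ*)` and `∇²_{ηθ} g(η*, θ*)` is its adjoint. -/
theorem benefit_of_coordination_bound_general
    {m d : ℕ}
    (f g : EuclideanSpace ℝ (Fin m) → EuclideanSpace ℝ (Fin d) → ℝ)
    (hf : ContDiff ℝ 1 fun p : EuclideanSpace ℝ (Fin m) × EuclideanSpace ℝ (Fin d) => f p.1 p.2)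
    (hg : ContDiff ℝ 2 fun p : EuclideanSpace ℝ (Fin m) × EuclideanSpace ℝ (Fin d) => g p.1 p.2)
    (θhat : EuclideanSpace ℝ (Fin m) → EuclideanSpace ℝ (Fin d))
    (hθhat : Differentiable ℝ θhat)
    -- the learner best-responds: `∇_θ g(η, θ̂(η)) = 0`
    (hcrit : ∀ η, gradient (g η) (θhat η) = 0)
    -- the selfish stable strategy `η*`, with `θ* = θ̂(η*)`
    (ηstar : EuclideanSpace ℝ (Fin m))
    (hηstar : gradient (fun η => f η (θhat ηstar)) ηstar = 0)
    -- the Hessian `H = ∇²_{θθ} g(η*, θ*)` and its inverse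
    (H : EuclideanSpace ℝ (Fin d) →L[ℝ] EuclideanSpace ℝ (Fin d))
    (hH : H = fderiv ℝ (gradient (g ηstar)) (θhat ηstar))
    (Hinv : EuclideanSpace ℝ (Fin d) →L[ℝ] EuclideanSpace ℝ (Fin d))
    (hHinv : Hinv.comp H = ContinuousLinearMap.id ℝ (EuclideanSpace ℝ (Fin d)) ∧
      H.comp Hinv = ContinuousLinearMap.id ℝ (EuclideanSpace ℝ (Fin d)))
    -- the mixed second derivative block `M = ∇²_{θη} g(η*, θ*)`
    (M : EuclideanSpace ℝ (Fin m) →L[ℝ] EuclideanSpace ℝ (Fin d))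
    (hM : M = fderiv ℝ (fun η' => gradient (g η') (θhat ηstar)) ηstar)
    -- the equilibrium utility `V(η) = f(η, θ̂(η))`, `γ`-strongly concave
    (V : EuclideanSpace ℝ (Fin m) → ℝ) (hV : ∀ η, V η = f η (θhat η))
    (γ : ℝ) (hγ : 0 < γ)
    (hconc : ∀ x y, V y ≤ V x + ⟪gradient V x, y - x⟫ - γ / 2 * ‖y - x‖ ^ 2) :
    -- the benefit of coordination is nonnegative ...
    (∀ ηsharp : EuclideanSpace ℝ (Fin m), (∀ η, V η ≤ V ηsharp) → 0 ≤ V ηsharp - V ηstar) ∧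
    -- ... and bounded by `(1/(2γ)) ‖∇²_{ηθ} g(η*, θ*) H⁻¹ ∇_θ f(η*, θ*)‖²`
    ∀ η, V η - V ηstar ≤
      1 / (2 * γ) *
        ‖ContinuousLinearMap.adjoint M (Hinv (gradient (f ηstar) (θhat ηstar)))‖ ^ 2 :=
  aux_benefit f g hf hg θhat hθhat hcrit ηstar hηstar H hH Hinv hHinv M hM V hV γ hγ hconc
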